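/- Let P ∈ ℤ[x_1,...,x_n] be a polynomial with P(e_i) > 0 for all i, and let c = x_1^{a_1}···x_n^{a_n} be a Laurent monomial with a ∈ ℤ^n, a ≠ 0. Then c·P (computed in the Laurent polynomial ring) is either not a polynomial, or it is a polynomial which fails the positivity condition, i.e. (c·P)(e_j) = 0 for some j. -/

import Mathlib

/-- The Laurent polynomial ring `ℤ[x₁^{±1},...,xₙ^{±1}]` in `n` variables. -/
abbrev MvLaurent (n : ℕ) : Type := AddMonoidAlgebra ℤ (Fin n →₀ ℤ)

/-- The canonical inclusion of the polynomial ring into the Laurent polynomial ring. -/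
noncomputable def toLaurent (n : ℕ) : MvPolynomial (Fin n) ℤ →+* MvLaurent n :=
  AddMonoidAlgebra.mapDomainRingHom ℤ
    (Finsupp.mapRange.addMonoidHom (Nat.castAddMonoidHom ℤ))

/-- The point `e i = (1,...,1,0,1,...,1)` with `0` in the `i`-th position. -/
def evalPoint (n : ℕ) (i : Fin n) : Fin n → ℤ := fun j => if j = i then 0 else 1

noncomputable def emb (n : ℕ) : (Fin n →₀ ℕ) → (Fin n →₀ ℤ) :=
  ⇑(Finsupp.mapRange.addMonoidHom (Nat.castAddMonoidHom ℤ))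

lemma emb_apply {n : ℕ} (k : Fin n →₀ ℕ) (j : Fin n) : emb n k j = (k j : ℤ) := by
  simp [emb]

lemma emb_inj {n : ℕ} : Function.Injective (emb n) := by
  apply Finsupp.mapRange_injective
  · simp
  · exact Nat.cast_injective

lemma toLaurent_apply {n : ℕ} (R : MvPolynomial (Fin n) ℤ) (k : Fin n →₀ ℕ) :
    (toLaurent n R).coeff (emb n k) = MvPolynomial.coeff k R := by
  exact Finsupp.mapDomain_apply emb_inj (AddMonoidAlgebra.coeff R) k

lemma toLaurent_neg_eq_zero {n : ℕ} (R : MvPolynomial (Fin n) ℤ) (m : Fin n →₀ ℤ)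
    (j : Fin n) (hm : m j < 0) : (toLaurent n R).coeff m = 0 := by
  apply Finsupp.mapDomain_notin_range
  rintro ⟨k, rfl⟩
  exact absurd hm (not_lt.mpr (by simp [emb]))

lemma eval_zero_of_support {n : ℕ} (R : MvPolynomial (Fin n) ℤ) (j : Fin n)
    (h : ∀ k ∈ R.support, k j ≠ 0) : MvPolynomial.eval (evalPoint n j) R = 0 := by
  rw [MvPolynomial.eval_eq]
  apply Finset.sum_eq_zero
  intro k hk
  have : (evalPoint n j j) ^ (k j) = 0 := by
    simp [evalPoint, zero_pow (h k hk)]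
  rw [Finset.prod_eq_zero (Finsupp.mem_support_iff.mpr (h k hk)) this, mul_zero]

/-- If `P` satisfies the positivity condition and `c = x^a` is a nontrivial Laurent
monomial, then `c·P` is either not a polynomial or fails the positivity condition. -/
theorem stmt6 {n : ℕ} (P : MvPolynomial (Fin n) ℤ)
    (hP : ∀ i : Fin n, 0 < MvPolynomial.eval (evalPoint n i) P)
    (a : Fin n →₀ ℤ) (ha : a ≠ 0) :
    ∀ Q : MvPolynomial (Fin n) ℤ,
      toLaurent n Q = (AddMonoidAlgebra.single a (1 : ℤ) : MvLaurent n) * toLaurent n P →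
      ∃ j : Fin n, MvPolynomial.eval (evalPoint n j) Q = 0 := by
  intro Q hQ
  obtain ⟨j, hj⟩ : ∃ j, a j ≠ 0 := by
    by_contra h; push_neg at h; exact ha (Finsupp.ext h)
  rcases lt_or_gt_of_ne hj with hneg | hpos
  · -- a j < 0 : contradiction, Q can't be a polynomial
    exfalso
    have hex : ∃ k ∈ P.support, k j = 0 := by
      by_contra h; push_neg at h
      exact absurd (eval_zero_of_support P j h) (hP j).ne'
    obtain ⟨k, hk, hkj⟩ := hex
    have h1 : (toLaurent n Q).coeff (a + emb n k) = MvPolynomial.coeff k P := by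
      rw [hQ, AddMonoidAlgebra.coeff_single_mul_apply, neg_add_cancel_left, one_mul,
        toLaurent_apply]
    have h2 : (toLaurent n Q).coeff (a + emb n k) = 0 := by
      apply toLaurent_neg_eq_zero _ _ j
      simp only [Finsupp.add_apply, emb_apply, hkj]
      omega
    exact (MvPolynomial.mem_support_iff.mp hk) (h1.symm.trans h2)
  · refine ⟨j, eval_zero_of_support Q j ?_⟩
    intro k hk hkj
    have h1 : (toLaurent n Q).coeff (emb n k) = MvPolynomial.coeff k Q := toLaurent_apply Q k
    have h2 : (toLaurent n Q).coeff (emb n k) = 0 := by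
      rw [hQ, AddMonoidAlgebra.coeff_single_mul_apply, one_mul]
      apply toLaurent_neg_eq_zero _ _ j
      simp only [Finsupp.add_apply, Finsupp.neg_apply, emb_apply]
      omega
    exact (MvPolynomial.mem_support_iff.mp hk) (h1 ▸ h2)
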